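/- Let $F$ be a graph with chromatic number at least 3, and let $G$ be an $F$-free graph. Suppose $A$ and $B$ are two disjoint independent sets of $G$ with $|B| \geq |V(F)|$. Let $X = N_G[B] \setminus A$ be the set of common neighbours of $B$ in $G$, minus $A$. Let $G_{A \to X}$ be the graph obtained from $G$ by deleting all edges incident with $A$ and adding all edges between $A$ and $X$. Then $G_{A \to X}$ is also $F$-free. -/

import Mathlib

/-- `G` contains a copy of `F` (a subgraph isomorphic to `F`). -/
def ContainsCopy {V β : Type*} (G : SimpleGraph V) (F : SimpleGraph β) : Prop :=
  ∃ f : β ↪ V, ∀ a b, F.Adj a b → G.Adj (f a) (f b)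

/-- The graph `G_{A → X}` where `X = N_G[B] \ A` is the set of common neighbours of `B`
minus `A`: delete all edges incident with `A` and add all edges between `A` and `X`. -/
def shiftGraph {V : Type*} (G : SimpleGraph V) (A B : Set V) : SimpleGraph V where
  Adj u v := (u ∉ A ∧ v ∉ A ∧ G.Adj u v) ∨
    (u ∈ A ∧ v ∉ A ∧ ∀ b ∈ B, G.Adj v b) ∨
    (v ∈ A ∧ u ∉ A ∧ ∀ b ∈ B, G.Adj u b)
  symm := by
    constructor
    intro u v h
    rcases h with ⟨h1, h2, h3⟩ | ⟨h1, h2, h3⟩ | ⟨h1, h2, h3⟩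
    · exact Or.inl ⟨h2, h1, h3.symm⟩
    · exact Or.inr (Or.inr ⟨h1, h2, h3⟩)
    · exact Or.inr (Or.inl ⟨h1, h2, h3⟩)
  loopless := by
    constructor
    intro v h
    rcases h with ⟨_, _, h⟩ | ⟨h1, h2, _⟩ | ⟨h1, h2, _⟩
    · exact G.irrefl h
    · exact h2 h1
    · exact h2 h1

/-- Proposition: if `G` is `F`-free, `χ(F) ≥ 3`, `A, B` are disjoint independent sets
with `|B| ≥ |V(F)|`, then `G_{A → X}` is still `F`-free, where `X = N_G[B] \ A`. -/
theorem stmt2 {V β : Type*} [Fintype β] (F : SimpleGraph β)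
    (hχ : 3 ≤ F.chromaticNumber)
    (G : SimpleGraph V) (hGF : ¬ ContainsCopy G F)
    (A B : Set V) (hAB : Disjoint A B)
    (hA : ∀ a ∈ A, ∀ a' ∈ A, ¬ G.Adj a a')
    (hB : ∀ b ∈ B, ∀ b' ∈ B, ¬ G.Adj b b')
    (hBcard : Fintype.card β ≤ B.ncard) :
    ¬ ContainsCopy (shiftGraph G A B) F := by
  classical
  rintro ⟨f, hf⟩
  by_cases hβ : IsEmpty β
  · exact hGF ⟨⟨fun x => (hβ.elim x), fun x => (hβ.elim x)⟩, fun a => (hβ.elim a)⟩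
  rw [not_isEmpty_iff] at hβ
  have hcardpos : 0 < Fintype.card β := Fintype.card_pos
  have hBfin : B.Finite := by
    by_contra h
    rw [Set.Infinite.ncard (by simpa using h)] at hBcard
    omega
  set S : Set β := f ⁻¹' A with hS
  have hSfin : S.Finite := Set.toFinite _
  set T : Set V := B \ (f '' Sᶜ) with hT
  have hTfin : T.Finite := hBfin.diff
  have hScfin : (Sᶜ : Set β).Finite := Set.toFinite _
  -- cardinality inequality
  have h1 : S.ncard + Sᶜ.ncard = Fintype.card β := by
    simpa using Set.ncard_add_ncard_compl S hSfin hScfin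
  have h2 : (f '' Sᶜ).ncard = Sᶜ.ncard := Set.ncard_image_of_injective _ f.injective
  have h3 : B.ncard ≤ T.ncard + (f '' Sᶜ).ncard :=
    Set.ncard_le_ncard_diff_add_ncard B _ (hScfin.image f)
  have hcard : S.ncard ≤ T.ncard := by omega
  haveI : Fintype S := hSfin.fintype
  haveI : Fintype T := hTfin.fintype
  have hcard' : Fintype.card S ≤ Fintype.card T := by
    rwa [Fintype.card_eq_nat_card, Fintype.card_eq_nat_card,
      Nat.card_coe_set_eq, Nat.card_coe_set_eq]
  obtain ⟨g⟩ := Function.Embedding.nonempty_of_card_le hcard'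
  -- define the new embedding
  set f' : β → V := fun x => if h : x ∈ S then (g ⟨x, h⟩ : V) else f x with hf'
  have hf'inj : Function.Injective f' := by
    intro x y hxy
    simp only [hf'] at hxy
    by_cases hx : x ∈ S <;> by_cases hy : y ∈ S
    · rw [dif_pos hx, dif_pos hy] at hxy
      have := g.injective (Subtype.ext hxy)
      exact congrArg Subtype.val (this)
    · rw [dif_pos hx, dif_neg hy] at hxy
      exact absurd ⟨y, hy, hxy.symm⟩ (g ⟨x, hx⟩).2.2
    · rw [dif_neg hx, dif_pos hy] at hxy
      exact absurd ⟨x, hx, hxy⟩ (g ⟨y, hy⟩).2.2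
    · rw [dif_neg hx, dif_neg hy] at hxy
      exact f.injective hxy
  refine hGF ⟨⟨f', hf'inj⟩, ?_⟩
  intro a b hab
  have hadj := hf a b hab
  simp only [Function.Embedding.coeFn_mk, hf']
  rcases hadj with ⟨h1, h2, h3⟩ | ⟨h1, h2, h3⟩ | ⟨h1, h2, h3⟩
  · rw [dif_neg (show a ∉ S from h1), dif_neg (show b ∉ S from h2)]; exact h3
  · rw [dif_pos (show a ∈ S from h1), dif_neg (show b ∉ S from h2)]
    exact (h3 _ (g ⟨a, h1⟩).2.1).symm
  · rw [dif_neg (show a ∉ S from h2), dif_pos (show b ∈ S from h1)]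
    exact h3 _ (g ⟨b, h1⟩).2.1
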